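/- Fix real numbers α > 0, β > 0, γ ≠ 0, ε > 0 and a period ℓ > 0; set σ = sgn(γ) ∈ {−1, 1}. Let f : ℝ → ℝ be C¹, F an antiderivative of f, and let U = (u, ψ, w, p) : ℝ × ℝ → ℝ⁴ be twice continuously differentiable, ℓ-periodic in its first (spatial) variable, and satisfy the hyperbolic–parabolic approximate system pointwise: ∂_t u + ∂_x(f(u) + σψ) = ε ∂_x² u, (1/α) ∂_t ψ + ∂_x(f(u) + σψ) = −w + (ε/α) ∂_x² ψ, β ∂_t w − |γ| ∂_x p = ψ, ∂_t p − ∂_x w = ε ∂_x² p. Then for every t, the total entropy t ↦ ∫₀^ℓ E^α(U(x,t)) dx is differentiable with derivative equal to −ε ∫₀^ℓ (σ f'(u(x,t)) (∂_x u(x,t))² + |γ| (∂_x p(x,t))² + (∂_x ψ(x,t))²/α) dx. If moreover σ f'(x) ≥ 0 for all x ∈ ℝ, this derivative is ≤ 0, i.e., the total entropy is nonincreasing in time. -/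

import Mathlib

/-- Partial derivative in the first (spatial) variable. -/
noncomputable def pdx (g : ℝ → ℝ → ℝ) (x t : ℝ) : ℝ := deriv (fun y => g y t) x

/-- Partial derivative in the second (temporal) variable. -/
noncomputable def pdt (g : ℝ → ℝ → ℝ) (x t : ℝ) : ℝ := deriv (fun s => g x s) t

section Aux

lemma hasDerivAt_sx {g : ℝ → ℝ → ℝ} (hd : Differentiable ℝ (Function.uncurry g)) (x t : ℝ) :
    HasDerivAt (fun y => g y t) (pdx g x t) x := by
  have h1 : HasDerivAt (fun y : ℝ => ((y, t) : ℝ × ℝ)) ((1:ℝ), (0:ℝ)) x :=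
    (hasDerivAt_id x).prodMk (hasDerivAt_const x t)
  exact ((hd (x, t)).hasFDerivAt.comp_hasDerivAt x h1).differentiableAt.hasDerivAt

lemma hasDerivAt_st {g : ℝ → ℝ → ℝ} (hd : Differentiable ℝ (Function.uncurry g)) (x t : ℝ) :
    HasDerivAt (fun s => g x s) (pdt g x t) t := by
  have h1 : HasDerivAt (fun s : ℝ => ((x, s) : ℝ × ℝ)) ((0:ℝ), (1:ℝ)) t :=
    (hasDerivAt_const t x).prodMk (hasDerivAt_id t)
  exact ((hd (x, t)).hasFDerivAt.comp_hasDerivAt t h1).differentiableAt.hasDerivAt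

lemma contDiff_uncurry_pdx {g : ℝ → ℝ → ℝ} {n : ℕ∞} (hg : ContDiff ℝ (n+1) (Function.uncurry g)) :
    ContDiff ℝ n (Function.uncurry (pdx g)) := by
  have hd : Differentiable ℝ (Function.uncurry g) := hg.differentiable (by simp)
  have key : ∀ x t : ℝ,
      HasDerivAt (fun y => g y t) (fderiv ℝ (Function.uncurry g) (x, t) (1, 0)) x := by
    intro x t
    have h1 : HasDerivAt (fun y : ℝ => ((y, t) : ℝ × ℝ)) ((1:ℝ), (0:ℝ)) x :=
      (hasDerivAt_id x).prodMk (hasDerivAt_const x t)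
    exact (hd (x, t)).hasFDerivAt.comp_hasDerivAt x h1
  have heq : Function.uncurry (pdx g)
      = fun q : ℝ × ℝ => fderiv ℝ (Function.uncurry g) q (1, 0) := by
    funext q
    exact (key q.1 q.2).deriv
  rw [heq]
  exact (hg.fderiv_right le_rfl).clm_apply contDiff_const

lemma contDiff_uncurry_pdt {g : ℝ → ℝ → ℝ} {n : ℕ∞} (hg : ContDiff ℝ (n+1) (Function.uncurry g)) :
    ContDiff ℝ n (Function.uncurry (pdt g)) := by
  have hd : Differentiable ℝ (Function.uncurry g) := hg.differentiable (by simp)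
  have key : ∀ x t : ℝ,
      HasDerivAt (fun s => g x s) (fderiv ℝ (Function.uncurry g) (x, t) (0, 1)) t := by
    intro x t
    have h1 : HasDerivAt (fun s : ℝ => ((x, s) : ℝ × ℝ)) ((0:ℝ), (1:ℝ)) t :=
      (hasDerivAt_const t x).prodMk (hasDerivAt_id t)
    exact (hd (x, t)).hasFDerivAt.comp_hasDerivAt t h1
  have heq : Function.uncurry (pdt g)
      = fun q : ℝ × ℝ => fderiv ℝ (Function.uncurry g) q (0, 1) := by
    funext q
    exact (key q.1 q.2).deriv
  rw [heq]
  exact (hg.fderiv_right le_rfl).clm_apply contDiff_const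

lemma pdx_periodic {g : ℝ → ℝ → ℝ} {ℓ : ℝ} (hper : ∀ x t, g (x + ℓ) t = g x t) (x t : ℝ) :
    pdx g (x + ℓ) t = pdx g x t := by
  have h : (fun y => g (y + ℓ) t) = fun y => g y t := by
    funext y; exact hper y t
  calc pdx g (x + ℓ) t = deriv (fun y => g (y + ℓ) t) x := (deriv_comp_add_const _ _ _).symm
    _ = pdx g x t := by rw [h]; rfl

lemma cont_slice_x {g : ℝ → ℝ → ℝ} (h : Continuous (Function.uncurry g)) (s : ℝ) :
    Continuous (fun x => g x s) :=
  h.comp (continuous_id.prodMk continuous_const)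

end Aux

/-- for an `ℓ`-periodic `C²` solution `U = (u, ψ, w, p)` of the
hyperbolic–parabolic approximate system, the total entropy `t ↦ ∫₀^ℓ E^α(U(x,t)) dx` is
differentiable with derivative
`-ε ∫₀^ℓ (σ f'(u) u_x² + |γ| p_x² + ψ_x²/α) dx`; if moreover `σ f' ≥ 0` everywhere, this
derivative is `≤ 0`, so the total entropy is nonincreasing. -/
theorem total_entropy_dissipation_periodic
    (α β γ ε ℓ σ : ℝ) (hα : 0 < α) (hβ : 0 < β) (hγ : γ ≠ 0) (hε : 0 < ε) (hℓ : 0 < ℓ)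
    (hσ : σ = Real.sign γ)
    (f F : ℝ → ℝ) (hf : ContDiff ℝ 1 f) (hF : ∀ x, HasDerivAt F (f x) x)
    (u ψ w p : ℝ → ℝ → ℝ)
    (hu : ContDiff ℝ 2 (Function.uncurry u)) (hψ : ContDiff ℝ 2 (Function.uncurry ψ))
    (hw : ContDiff ℝ 2 (Function.uncurry w)) (hp : ContDiff ℝ 2 (Function.uncurry p))
    (hup : ∀ x t, u (x + ℓ) t = u x t) (hψp : ∀ x t, ψ (x + ℓ) t = ψ x t)
    (hwp : ∀ x t, w (x + ℓ) t = w x t) (hpp : ∀ x t, p (x + ℓ) t = p x t)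
    (heq1 : ∀ x t, pdt u x t + pdx (fun y s => f (u y s) + σ * ψ y s) x t
      = ε * pdx (pdx u) x t)
    (heq2 : ∀ x t, (1 / α) * pdt ψ x t + pdx (fun y s => f (u y s) + σ * ψ y s) x t
      = -w x t + (ε / α) * pdx (pdx ψ) x t)
    (heq3 : ∀ x t, β * pdt w x t - |γ| * pdx p x t = ψ x t)
    (heq4 : ∀ x t, pdt p x t - pdx w x t = ε * pdx (pdx p) x t) :
    ∀ t : ℝ,
      HasDerivAt
        (fun s => ∫ x in (0:ℝ)..ℓ,
          (σ * F (u x s) + |γ| * (p x s) ^ 2 / 2 + (ψ x s) ^ 2 / (2 * α)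
            + β * (w x s) ^ 2 / 2))
        (-(ε * ∫ x in (0:ℝ)..ℓ,
          (σ * deriv f (u x t) * (pdx u x t) ^ 2 + |γ| * (pdx p x t) ^ 2
            + (pdx ψ x t) ^ 2 / α))) t ∧
      ((∀ y : ℝ, 0 ≤ σ * deriv f y) →
        -(ε * ∫ x in (0:ℝ)..ℓ,
          (σ * deriv f (u x t) * (pdx u x t) ^ 2 + |γ| * (pdx p x t) ^ 2
            + (pdx ψ x t) ^ 2 / α)) ≤ 0) := by
  -- sign facts
  have hσσ : σ * σ = 1 := by
    rcases lt_or_gt_of_ne hγ with h | h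
    · rw [hσ, Real.sign_of_neg h]; norm_num
    · rw [hσ, Real.sign_of_pos h]; norm_num
  -- regularity bookkeeping
  have hu' : ContDiff ℝ ((1:ℕ∞)+1) (Function.uncurry u) := by exact_mod_cast hu
  have hψ' : ContDiff ℝ ((1:ℕ∞)+1) (Function.uncurry ψ) := by exact_mod_cast hψ
  have hw' : ContDiff ℝ ((1:ℕ∞)+1) (Function.uncurry w) := by exact_mod_cast hw
  have hp' : ContDiff ℝ ((1:ℕ∞)+1) (Function.uncurry p) := by exact_mod_cast hp
  have hud : Differentiable ℝ (Function.uncurry u) := hu.differentiable two_ne_zero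
  have hψd : Differentiable ℝ (Function.uncurry ψ) := hψ.differentiable two_ne_zero
  have hwd : Differentiable ℝ (Function.uncurry w) := hw.differentiable two_ne_zero
  have hpd : Differentiable ℝ (Function.uncurry p) := hp.differentiable two_ne_zero
  have hux := contDiff_uncurry_pdx hu'
  have hψx := contDiff_uncurry_pdx hψ'
  have hwx := contDiff_uncurry_pdx hw'
  have hpx := contDiff_uncurry_pdx hp'
  have hux0 : ContDiff ℝ ((0:ℕ∞)+1) (Function.uncurry (pdx u)) := by exact_mod_cast hux
  have hψx0 : ContDiff ℝ ((0:ℕ∞)+1) (Function.uncurry (pdx ψ)) := by exact_mod_cast hψx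
  have hwx0 : ContDiff ℝ ((0:ℕ∞)+1) (Function.uncurry (pdx w)) := by exact_mod_cast hwx
  have hpx0 : ContDiff ℝ ((0:ℕ∞)+1) (Function.uncurry (pdx p)) := by exact_mod_cast hpx
  have huxd : Differentiable ℝ (Function.uncurry (pdx u)) := hux0.differentiable (by simp)
  have hψxd : Differentiable ℝ (Function.uncurry (pdx ψ)) := hψx0.differentiable (by simp)
  have hwxd : Differentiable ℝ (Function.uncurry (pdx w)) := hwx0.differentiable (by simp)
  have hpxd : Differentiable ℝ (Function.uncurry (pdx p)) := hpx0.differentiable (by simp)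
  have huxx : Continuous (Function.uncurry (pdx (pdx u))) :=
    (contDiff_uncurry_pdx hux0).continuous
  have hψxx : Continuous (Function.uncurry (pdx (pdx ψ))) :=
    (contDiff_uncurry_pdx hψx0).continuous
  have hpxx : Continuous (Function.uncurry (pdx (pdx p))) :=
    (contDiff_uncurry_pdx hpx0).continuous
  have hut : Continuous (Function.uncurry (pdt u)) := (contDiff_uncurry_pdt hu').continuous
  have hψt : Continuous (Function.uncurry (pdt ψ)) := (contDiff_uncurry_pdt hψ').continuous
  have hwt : Continuous (Function.uncurry (pdt w)) := (contDiff_uncurry_pdt hw').continuous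
  have hpt : Continuous (Function.uncurry (pdt p)) := (contDiff_uncurry_pdt hp').continuous
  have hfd : Differentiable ℝ f := hf.differentiable one_ne_zero
  have hfc : Continuous f := hf.continuous
  have hf'c : Continuous (deriv f) := hf.continuous_deriv le_rfl
  have hFd : Differentiable ℝ F := fun x => (hF x).differentiableAt
  have hFc : Continuous F := hFd.continuous
  -- pdx of the flux f(u) + σ ψ
  have hfu : ∀ x s, HasDerivAt (fun y => f (u y s)) (deriv f (u x s) * pdx u x s) x := by
    intro x s
    exact (hfd (u x s)).hasDerivAt.comp x (hasDerivAt_sx hud x s)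
  have hGx : ∀ x s, HasDerivAt (fun y => f (u y s) + σ * ψ y s)
      (deriv f (u x s) * pdx u x s + σ * pdx ψ x s) x := by
    intro x s
    exact (hfu x s).add ((hasDerivAt_sx hψd x s).const_mul σ)
  have heq1' : ∀ x s, pdt u x s + (deriv f (u x s) * pdx u x s + σ * pdx ψ x s)
      = ε * pdx (pdx u) x s := by
    intro x s
    have h := heq1 x s
    rwa [show pdx (fun y s' => f (u y s') + σ * ψ y s') x s
        = deriv f (u x s) * pdx u x s + σ * pdx ψ x s from (hGx x s).deriv] at h
  have heq2' : ∀ x s, (1 / α) * pdt ψ x s + (deriv f (u x s) * pdx u x s + σ * pdx ψ x s)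
      = -w x s + (ε / α) * pdx (pdx ψ) x s := by
    intro x s
    have h := heq2 x s
    rwa [show pdx (fun y s' => f (u y s') + σ * ψ y s') x s
        = deriv f (u x s) * pdx u x s + σ * pdx ψ x s from (hGx x s).deriv] at h
  -- time derivative of the entropy integrand
  have hEt : ∀ x s, HasDerivAt
      (fun s' => σ * F (u x s') + |γ| * (p x s') ^ 2 / 2 + (ψ x s') ^ 2 / (2 * α)
        + β * (w x s') ^ 2 / 2)
      (σ * f (u x s) * pdt u x s + |γ| * p x s * pdt p x s + ψ x s * pdt ψ x s / α
        + β * w x s * pdt w x s) s := by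
    intro x s
    have h1 : HasDerivAt (fun s' => σ * F (u x s')) (σ * (f (u x s) * pdt u x s)) s :=
      ((hF (u x s)).comp s (hasDerivAt_st hud x s)).const_mul σ
    have h2 : HasDerivAt (fun s' => |γ| * (p x s') ^ 2 / 2)
        (|γ| * ((2:ℕ) * p x s ^ 1 * pdt p x s) / 2) s :=
      (((hasDerivAt_st hpd x s).pow 2).const_mul |γ|).div_const 2
    have h3 : HasDerivAt (fun s' => (ψ x s') ^ 2 / (2 * α))
        (((2:ℕ) * ψ x s ^ 1 * pdt ψ x s) / (2 * α)) s :=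
      ((hasDerivAt_st hψd x s).pow 2).div_const (2 * α)
    have h4 : HasDerivAt (fun s' => β * (w x s') ^ 2 / 2)
        (β * ((2:ℕ) * w x s ^ 1 * pdt w x s) / 2) s :=
      (((hasDerivAt_st hwd x s).pow 2).const_mul β).div_const 2
    have h := ((h1.add h2).add h3).add h4
    refine h.congr_deriv ?_
    push_cast
    ring
  -- pointwise identity:  ∂ₜ E = ∂ₓ H − ε D
  have hkey : ∀ x s,
      σ * f (u x s) * pdt u x s + |γ| * p x s * pdt p x s + ψ x s * pdt ψ x s / α
        + β * w x s * pdt w x s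
      = (-(σ * ((f (u x s) + σ * ψ x s) * (deriv f (u x s) * pdx u x s + σ * pdx ψ x s)))
          + |γ| * (pdx w x s * p x s + w x s * pdx p x s)
          + ε * σ * (deriv f (u x s) * pdx u x s * pdx u x s + f (u x s) * pdx (pdx u) x s)
          + (ε / α) * (pdx ψ x s * pdx ψ x s + ψ x s * pdx (pdx ψ) x s)
          + ε * |γ| * (pdx p x s * pdx p x s + p x s * pdx (pdx p) x s))
        - ε * (σ * deriv f (u x s) * (pdx u x s) ^ 2 + |γ| * (pdx p x s) ^ 2
          + (pdx ψ x s) ^ 2 / α) := by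
    intro x s
    have e1 := heq1' x s
    have e2 := heq2' x s
    have e3 := heq3 x s
    have e4 := heq4 x s
    have hαne : α ≠ 0 := ne_of_gt hα
    field_simp at e2 ⊢
    linear_combination (σ * f (u x s) * α) * e1 + (ψ x s) * e2 + (α * w x s) * e3
      + (α * |γ| * p x s) * e4
      + (α * ψ x s * deriv f (u x s) * pdx u x s + α * σ * ψ x s * pdx ψ x s
          - α * ε * σ * ψ x s * pdx (pdx ψ) x s) * hσσ
      + (σ * α * ε * ψ x s * pdx (pdx ψ) x s) * hσσ
  -- continuity of the various integrands
  have hcu : Continuous (Function.uncurry u) := hud.continuous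
  have hcψ : Continuous (Function.uncurry ψ) := hψd.continuous
  have hcw : Continuous (Function.uncurry w) := hwd.continuous
  have hcp : Continuous (Function.uncurry p) := hpd.continuous
  have hcEt : Continuous (fun q : ℝ × ℝ =>
      σ * f (u q.1 q.2) * pdt u q.1 q.2 + |γ| * p q.1 q.2 * pdt p q.1 q.2
        + ψ q.1 q.2 * pdt ψ q.1 q.2 / α + β * w q.1 q.2 * pdt w q.1 q.2) := by
    exact ((((continuous_const.mul (hfc.comp hcu)).mul hut).add
      ((continuous_const.mul hcp).mul hpt)).add
      ((hcψ.mul hψt).div_const α)).add ((continuous_const.mul hcw).mul hwt)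
  have hcE : ∀ s, Continuous (fun x =>
      σ * F (u x s) + |γ| * (p x s) ^ 2 / 2 + (ψ x s) ^ 2 / (2 * α) + β * (w x s) ^ 2 / 2) := by
    intro s
    have hus := cont_slice_x hcu s
    have hps := cont_slice_x hcp s
    have hψs := cont_slice_x hcψ s
    have hws := cont_slice_x hcw s
    exact (((continuous_const.mul (hFc.comp hus)).add
      ((continuous_const.mul (hps.pow 2)).div_const 2)).add
      ((hψs.pow 2).div_const (2 * α))).add ((continuous_const.mul (hws.pow 2)).div_const 2)
  intro t₀
  -- continuity in x at the fixed time t₀ of the dissipation and flux-derivative integrands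
  have hcux := cont_slice_x hux.continuous t₀
  have hcψx := cont_slice_x hψx.continuous t₀
  have hcwx := cont_slice_x hwx.continuous t₀
  have hcpx := cont_slice_x hpx.continuous t₀
  have hcuxx := cont_slice_x huxx t₀
  have hcψxx := cont_slice_x hψxx t₀
  have hcpxx := cont_slice_x hpxx t₀
  have hcus := cont_slice_x hcu t₀
  have hcψs := cont_slice_x hcψ t₀
  have hcws := cont_slice_x hcw t₀
  have hcps := cont_slice_x hcp t₀
  have hcD : Continuous (fun x =>
      σ * deriv f (u x t₀) * (pdx u x t₀) ^ 2 + |γ| * (pdx p x t₀) ^ 2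
        + (pdx ψ x t₀) ^ 2 / α) := by
    exact (((continuous_const.mul (hf'c.comp hcus)).mul (hcux.pow 2)).add
      (continuous_const.mul (hcpx.pow 2))).add ((hcψx.pow 2).div_const α)
  have hcHx : Continuous (fun x =>
      -(σ * ((f (u x t₀) + σ * ψ x t₀) * (deriv f (u x t₀) * pdx u x t₀ + σ * pdx ψ x t₀)))
        + |γ| * (pdx w x t₀ * p x t₀ + w x t₀ * pdx p x t₀)
        + ε * σ * (deriv f (u x t₀) * pdx u x t₀ * pdx u x t₀
            + f (u x t₀) * pdx (pdx u) x t₀)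
        + (ε / α) * (pdx ψ x t₀ * pdx ψ x t₀ + ψ x t₀ * pdx (pdx ψ) x t₀)
        + ε * |γ| * (pdx p x t₀ * pdx p x t₀ + p x t₀ * pdx (pdx p) x t₀)) := by
    exact (((((continuous_const.mul (((hfc.comp hcus).add (continuous_const.mul hcψs)).mul
      (((hf'c.comp hcus).mul hcux).add (continuous_const.mul hcψx)))).neg).add
      (continuous_const.mul ((hcwx.mul hcps).add (hcws.mul hcpx)))).add
      (continuous_const.mul (((hf'c.comp hcus).mul hcux).mul hcux |>.add
        ((hfc.comp hcus).mul hcuxx)))).add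
      (continuous_const.mul ((hcψx.mul hcψx).add (hcψs.mul hcψxx)))).add
      (continuous_const.mul ((hcpx.mul hcpx).add (hcps.mul hcpxx)))
  -- ∫₀^ℓ ∂ₓ H dx = 0 by FTC and periodicity
  have hHder : ∀ y : ℝ, HasDerivAt (fun z =>
      -(σ * (f (u z t₀) + σ * ψ z t₀) ^ 2 / 2) + |γ| * (w z t₀ * p z t₀)
        + ε * σ * (f (u z t₀) * pdx u z t₀) + (ε / α) * (ψ z t₀ * pdx ψ z t₀)
        + ε * |γ| * (p z t₀ * pdx p z t₀))
      (-(σ * ((f (u y t₀) + σ * ψ y t₀) * (deriv f (u y t₀) * pdx u y t₀ + σ * pdx ψ y t₀)))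
        + |γ| * (pdx w y t₀ * p y t₀ + w y t₀ * pdx p y t₀)
        + ε * σ * (deriv f (u y t₀) * pdx u y t₀ * pdx u y t₀
            + f (u y t₀) * pdx (pdx u) y t₀)
        + (ε / α) * (pdx ψ y t₀ * pdx ψ y t₀ + ψ y t₀ * pdx (pdx ψ) y t₀)
        + ε * |γ| * (pdx p y t₀ * pdx p y t₀ + p y t₀ * pdx (pdx p) y t₀)) y := by
    intro y
    have t1 : HasDerivAt (fun z => -(σ * (f (u z t₀) + σ * ψ z t₀) ^ 2 / 2))
        (-(σ * ((2:ℕ) * (f (u y t₀) + σ * ψ y t₀) ^ 1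
          * (deriv f (u y t₀) * pdx u y t₀ + σ * pdx ψ y t₀)) / 2)) y :=
      ((((hGx y t₀).pow 2).const_mul σ).div_const 2).neg
    have t2 : HasDerivAt (fun z => |γ| * (w z t₀ * p z t₀))
        (|γ| * (pdx w y t₀ * p y t₀ + w y t₀ * pdx p y t₀)) y :=
      ((hasDerivAt_sx hwd y t₀).mul (hasDerivAt_sx hpd y t₀)).const_mul |γ|
    have t3 : HasDerivAt (fun z => ε * σ * (f (u z t₀) * pdx u z t₀))
        (ε * σ * (deriv f (u y t₀) * pdx u y t₀ * pdx u y t₀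
          + f (u y t₀) * pdx (pdx u) y t₀)) y :=
      ((hfu y t₀).mul (hasDerivAt_sx huxd y t₀)).const_mul (ε * σ)
    have t4 : HasDerivAt (fun z => (ε / α) * (ψ z t₀ * pdx ψ z t₀))
        ((ε / α) * (pdx ψ y t₀ * pdx ψ y t₀ + ψ y t₀ * pdx (pdx ψ) y t₀)) y :=
      ((hasDerivAt_sx hψd y t₀).mul (hasDerivAt_sx hψxd y t₀)).const_mul (ε / α)
    have t5 : HasDerivAt (fun z => ε * |γ| * (p z t₀ * pdx p z t₀))
        (ε * |γ| * (pdx p y t₀ * pdx p y t₀ + p y t₀ * pdx (pdx p) y t₀)) y :=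
      ((hasDerivAt_sx hpd y t₀).mul (hasDerivAt_sx hpxd y t₀)).const_mul (ε * |γ|)
    have h := (((t1.add t2).add t3).add t4).add t5
    refine h.congr_deriv ?_
    push_cast
    ring
  have hHint : ∫ x in (0:ℝ)..ℓ,
      (-(σ * ((f (u x t₀) + σ * ψ x t₀) * (deriv f (u x t₀) * pdx u x t₀ + σ * pdx ψ x t₀)))
        + |γ| * (pdx w x t₀ * p x t₀ + w x t₀ * pdx p x t₀)
        + ε * σ * (deriv f (u x t₀) * pdx u x t₀ * pdx u x t₀
            + f (u x t₀) * pdx (pdx u) x t₀)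
        + (ε / α) * (pdx ψ x t₀ * pdx ψ x t₀ + ψ x t₀ * pdx (pdx ψ) x t₀)
        + ε * |γ| * (pdx p x t₀ * pdx p x t₀ + p x t₀ * pdx (pdx p) x t₀)) = 0 := by
    rw [intervalIntegral.integral_eq_sub_of_hasDerivAt (fun y _ => hHder y)
      (hcHx.intervalIntegrable 0 ℓ)]
    have : (ℓ : ℝ) = 0 + ℓ := by ring
    rw [this, hup, hψp, hwp, hpp, pdx_periodic hup, pdx_periodic hψp, pdx_periodic hpp]
    ring
  -- the two integrals split
  have hID : IntervalIntegrable (fun x =>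
      σ * deriv f (u x t₀) * (pdx u x t₀) ^ 2 + |γ| * (pdx p x t₀) ^ 2
        + (pdx ψ x t₀) ^ 2 / α) MeasureTheory.volume 0 ℓ := hcD.intervalIntegrable 0 ℓ
  have hIH : IntervalIntegrable (fun x =>
      -(σ * ((f (u x t₀) + σ * ψ x t₀) * (deriv f (u x t₀) * pdx u x t₀ + σ * pdx ψ x t₀)))
        + |γ| * (pdx w x t₀ * p x t₀ + w x t₀ * pdx p x t₀)
        + ε * σ * (deriv f (u x t₀) * pdx u x t₀ * pdx u x t₀
            + f (u x t₀) * pdx (pdx u) x t₀)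
        + (ε / α) * (pdx ψ x t₀ * pdx ψ x t₀ + ψ x t₀ * pdx (pdx ψ) x t₀)
        + ε * |γ| * (pdx p x t₀ * pdx p x t₀ + p x t₀ * pdx (pdx p) x t₀))
      MeasureTheory.volume 0 ℓ := hcHx.intervalIntegrable 0 ℓ
  have hIsplit : ∫ x in (0:ℝ)..ℓ,
      (σ * f (u x t₀) * pdt u x t₀ + |γ| * p x t₀ * pdt p x t₀
        + ψ x t₀ * pdt ψ x t₀ / α + β * w x t₀ * pdt w x t₀)
      = -(ε * ∫ x in (0:ℝ)..ℓ,
        (σ * deriv f (u x t₀) * (pdx u x t₀) ^ 2 + |γ| * (pdx p x t₀) ^ 2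
          + (pdx ψ x t₀) ^ 2 / α)) := by
    have hcongr : ∫ x in (0:ℝ)..ℓ,
        (σ * f (u x t₀) * pdt u x t₀ + |γ| * p x t₀ * pdt p x t₀
          + ψ x t₀ * pdt ψ x t₀ / α + β * w x t₀ * pdt w x t₀)
        = ∫ x in (0:ℝ)..ℓ,
        ((-(σ * ((f (u x t₀) + σ * ψ x t₀)
              * (deriv f (u x t₀) * pdx u x t₀ + σ * pdx ψ x t₀)))
          + |γ| * (pdx w x t₀ * p x t₀ + w x t₀ * pdx p x t₀)
          + ε * σ * (deriv f (u x t₀) * pdx u x t₀ * pdx u x t₀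
              + f (u x t₀) * pdx (pdx u) x t₀)
          + (ε / α) * (pdx ψ x t₀ * pdx ψ x t₀ + ψ x t₀ * pdx (pdx ψ) x t₀)
          + ε * |γ| * (pdx p x t₀ * pdx p x t₀ + p x t₀ * pdx (pdx p) x t₀))
        - ε * (σ * deriv f (u x t₀) * (pdx u x t₀) ^ 2 + |γ| * (pdx p x t₀) ^ 2
            + (pdx ψ x t₀) ^ 2 / α)) :=
      intervalIntegral.integral_congr (fun x _ => hkey x t₀)
    rw [hcongr, intervalIntegral.integral_sub hIH (hID.const_mul ε),
      intervalIntegral.integral_const_mul, hHint]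
    ring
  constructor
  · -- differentiation under the integral sign
    obtain ⟨M, hM⟩ := (IsCompact.exists_bound_of_continuousOn
      ((isCompact_Icc (a := (0:ℝ)) (b := ℓ)).prod
        (isCompact_Icc (a := t₀ - 1) (b := t₀ + 1))) hcEt.continuousOn)
    have hder := (intervalIntegral.hasDerivAt_integral_of_dominated_loc_of_deriv_le
      (F := fun s x => σ * F (u x s) + |γ| * (p x s) ^ 2 / 2 + (ψ x s) ^ 2 / (2 * α)
        + β * (w x s) ^ 2 / 2)
      (F' := fun s x => σ * f (u x s) * pdt u x s + |γ| * p x s * pdt p x s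
        + ψ x s * pdt ψ x s / α + β * w x s * pdt w x s)
      (x₀ := t₀) (s := Metric.ball t₀ 1) (a := 0) (b := ℓ) (μ := MeasureTheory.volume)
      (bound := fun _ => M) (Metric.ball_mem_nhds t₀ one_pos)
      (Filter.Eventually.of_forall fun s => ((hcE s).aestronglyMeasurable))
      ((hcE t₀).intervalIntegrable 0 ℓ)
      ((hcEt.comp (continuous_id.prodMk (continuous_const : Continuous fun _ : ℝ => t₀))).aestronglyMeasurable)
      (MeasureTheory.ae_of_all _ (fun x hx s hs => by
        have hx' : x ∈ Set.Icc (0:ℝ) ℓ := by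
          rw [Set.uIoc_of_le hℓ.le] at hx
          exact Set.Ioc_subset_Icc_self hx
        have hs' : s ∈ Set.Icc (t₀ - 1) (t₀ + 1) := by
          have := abs_lt.mp (by rwa [Metric.mem_ball, Real.dist_eq] at hs)
          constructor <;> linarith [this.1, this.2]
        exact hM (x, s) (Set.mk_mem_prod hx' hs')))
      (intervalIntegrable_const)
      (MeasureTheory.ae_of_all _ (fun x _ s _ => hEt x s))).2
    have := hIsplit ▸ hder
    exact this
  · intro hpos
    have h0 : 0 ≤ ∫ x in (0:ℝ)..ℓ,
        (σ * deriv f (u x t₀) * (pdx u x t₀) ^ 2 + |γ| * (pdx p x t₀) ^ 2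
          + (pdx ψ x t₀) ^ 2 / α) := by
      apply intervalIntegral.integral_nonneg hℓ.le
      intro x _
      have h1 : 0 ≤ σ * deriv f (u x t₀) * (pdx u x t₀) ^ 2 :=
        mul_nonneg (hpos (u x t₀)) (sq_nonneg _)
      have h2 : 0 ≤ |γ| * (pdx p x t₀) ^ 2 := mul_nonneg (abs_nonneg γ) (sq_nonneg _)
      have h3 : 0 ≤ (pdx ψ x t₀) ^ 2 / α := div_nonneg (sq_nonneg _) hα.le
      linarith
    have := mul_nonneg hε.le h0
    linarith
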